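/- Every element of the discrete Heisenberg group H expressible as a product of k generators from {x, x^{-1}, y, y^{-1}} is an upper unitriangular matrix with |a| ≤ k, |b| ≤ k, and |c| ≤ k^2/2, where a, b, c are the (1,2), (2,3), (1,3) entries respectively. -/

import Mathlib

@[ext]
structure Heis (R : Type*) [CommRing R] where
  a : R
  b : R
  c : R

namespace Heis
variable {R : Type*} [CommRing R]

instance : One (Heis R) := ⟨⟨0, 0, 0⟩⟩
instance : Mul (Heis R) := ⟨fun p q => ⟨p.a + q.a, p.b + q.b, p.c + q.c + p.a * q.b⟩⟩
instance : Inv (Heis R) := ⟨fun p => ⟨-p.a, -p.b, -p.c + p.a * p.b⟩⟩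

theorem mul_def (p q : Heis R) :
    p * q = ⟨p.a + q.a, p.b + q.b, p.c + q.c + p.a * q.b⟩ := rfl
theorem one_def : (1 : Heis R) = ⟨0, 0, 0⟩ := rfl
theorem inv_def (p : Heis R) : p⁻¹ = ⟨-p.a, -p.b, -p.c + p.a * p.b⟩ := rfl

instance : Group (Heis R) where
  mul_assoc p q r := by ext <;> simp [mul_def] <;> ring
  one_mul p := by ext <;> simp [mul_def, one_def]
  mul_one p := by ext <;> simp [mul_def, one_def]
  inv_mul_cancel p := by ext <;> simp [mul_def, one_def, inv_def]

/-- generator x -/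
def xgen : Heis R := ⟨1, 0, 0⟩
/-- generator y -/
def ygen : Heis R := ⟨0, 1, 0⟩

end Heis

/-- every element of the discrete Heisenberg group that is a product of
k generators from {x, x⁻¹, y, y⁻¹} has entries |a| ≤ k, |b| ≤ k, |c| ≤ k²/2. -/
theorem heisenberg_word_entry_bounds (k : ℕ) (l : List (Heis ℤ))
    (hlen : l.length = k)
    (hmem : ∀ g ∈ l, g = Heis.xgen ∨ g = Heis.xgen⁻¹ ∨ g = Heis.ygen ∨ g = Heis.ygen⁻¹) :
    |l.prod.a| ≤ (k : ℤ) ∧ |l.prod.b| ≤ (k : ℤ) ∧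
      |(l.prod.c : ℚ)| ≤ (k : ℚ) ^ 2 / 2 := by
  subst hlen
  induction l with
  | nil => simp [Heis.one_def]
  | cons g l ih =>
    obtain ⟨ha, hb, hc⟩ := ih (fun g hg => hmem g (List.mem_cons_of_mem _ hg))
    have hg := hmem g (List.mem_cons_self)
    have hga : |g.a| ≤ 1 ∧ |g.b| ≤ 1 ∧ g.c = 0 := by
      rcases hg with h | h | h | h <;> subst h <;>
        simp [Heis.xgen, Heis.ygen, Heis.inv_def]
    obtain ⟨hga1, hgb1, hgc⟩ := hga
    rw [List.prod_cons, Heis.mul_def]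
    set n : ℤ := (l.length : ℤ)
    have hn : (0:ℤ) ≤ n := Int.natCast_nonneg _
    refine ⟨?_, ?_, ?_⟩
    · calc |g.a + l.prod.a| ≤ |g.a| + |l.prod.a| := abs_add_le _ _
        _ ≤ 1 + n := add_le_add hga1 ha
        _ = ((l.length + 1 : ℕ) : ℤ) := by push_cast; ring
    · calc |g.b + l.prod.b| ≤ |g.b| + |l.prod.b| := abs_add_le _ _
        _ ≤ 1 + n := add_le_add hgb1 hb
        _ = ((l.length + 1 : ℕ) : ℤ) := by push_cast; ring
    · have ha' : |(l.prod.a : ℚ)| ≤ (l.length : ℚ) := by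
        rw [← Rat.cast_intCast] at *
        exact_mod_cast ha
      have hb' : |(l.prod.b : ℚ)| ≤ (l.length : ℚ) := by exact_mod_cast hb
      have hga' : |(g.a : ℚ)| ≤ 1 := by exact_mod_cast hga1
      have hn' : (0:ℚ) ≤ (l.length : ℚ) := Nat.cast_nonneg _
      push_cast [hgc]
      calc |(0:ℚ) + l.prod.c + g.a * l.prod.b|
          ≤ |(0:ℚ) + l.prod.c| + |(g.a : ℚ) * l.prod.b| := abs_add_le _ _
        _ = |(l.prod.c : ℚ)| + |(g.a:ℚ)| * |(l.prod.b:ℚ)| := by rw [zero_add, abs_mul]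
        _ ≤ (l.length : ℚ)^2/2 + 1 * (l.length : ℚ) := by
            gcongr
        _ ≤ ((l.length : ℚ) + 1)^2/2 := by nlinarith
        _ = ((g :: l).length : ℚ)^2/2 := by push_cast [List.length_cons]; ring
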